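/- For G = ℤ/2^n ℤ with n ≥ 2, the minimal number of vertices μ(G) of a graph with automorphism group isomorphic to G satisfies μ(G) ≤ 2^n + 6 < 2·|G|, for all n ≥ 3. -/

import Mathlib

/-- One-directional edge description of the graph `Γ_m`, on labels `1,…,m+6`. -/
def rel0 (m a b : ℕ) : Prop :=
  (1 ≤ a ∧ a ≤ m - 1 ∧ b = a + 1) ∨ (a = 1 ∧ b = m) ∨
  (a = m+1 ∧ 1 ≤ b ∧ b ≤ m ∧ (b % 4 = 1 ∨ b % 4 = 2)) ∨
  (a = m+2 ∧ 1 ≤ b ∧ b ≤ m ∧ (b % 4 = 2 ∨ b % 4 = 3)) ∨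
  (a = m+3 ∧ 1 ≤ b ∧ b ≤ m ∧ (b % 4 = 3 ∨ b % 4 = 0)) ∨
  (a = m+4 ∧ 1 ≤ b ∧ b ≤ m ∧ (b % 4 = 0 ∨ b % 4 = 1)) ∨
  (a = m+5 ∧ 1 ≤ b ∧ b ≤ m ∧ b % 2 = 1) ∨
  (a = m+6 ∧ 1 ≤ b ∧ b ≤ m ∧ b % 2 = 0) ∨
  (a = m+1 ∧ b = m+5) ∨ (a = m+3 ∧ b = m+5) ∨
  (a = m+2 ∧ b = m+6) ∨ (a = m+4 ∧ b = m+6)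

instance (m a b : ℕ) : Decidable (rel0 m a b) := by unfold rel0; infer_instance

/-- The graph `Γ_m` on vertex set `{1,…,m+6}`, encoded on `Fin (m+6)`
    where the vertex `v : Fin (m+6)` carries the label `v.val + 1`. -/
def Gamma (m : ℕ) : SimpleGraph (Fin (m+6)) where
  Adj a b := a ≠ b ∧ (rel0 m (a.val+1) (b.val+1) ∨ rel0 m (b.val+1) (a.val+1))
  symm := ⟨fun a b h => ⟨fun e => h.1 e.symm, h.2.symm⟩⟩
  loopless := ⟨fun a h => h.1 rfl⟩

instance (m : ℕ) : DecidableRel (Gamma m).Adj := fun a b =>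
  inferInstanceAs (Decidable (a ≠ b ∧ _))

/-- The permutation `g = (1,2,…,m)(m+1,m+2,m+3,m+4)(m+5,m+6)` on labels,
    written on `Fin (m+6)` (label = index + 1). -/
def gFun (m : ℕ) (v : Fin (m+6)) : Fin (m+6) :=
  if h : v.val < m then ⟨(v.val + 1) % m, lt_of_lt_of_le (Nat.mod_lt _ (by omega)) (by omega)⟩
  else if h2 : v.val < m + 3 then ⟨v.val + 1, by omega⟩
  else if h3 : v.val = m + 3 then ⟨m, by omega⟩
  else if h4 : v.val = m + 4 then ⟨m + 5, by omega⟩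
  else ⟨m + 4, by omega⟩

/-- `N` carries a graph with automorphism group `ℤ/2^n ℤ`. -/
def HasAutCyclic2 (n N : ℕ) : Prop :=
  ∃ Γ : SimpleGraph (Fin N),
    Nonempty ((Γ ≃g Γ) ≃* Multiplicative (ZMod (2 ^ n)))


namespace S19

abbrev V (m : ℕ) := ZMod m ⊕ ZMod 4 ⊕ ZMod 2

def rr (m : ℕ) (x : ZMod m) : ZMod 4 := (x.val : ZMod 4)
def pr (m : ℕ) (x : ZMod m) : ZMod 2 := (x.val : ZMod 2)
def c42 (i : ZMod 4) : ZMod 2 := (i.val : ZMod 2)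

def adj0 (m : ℕ) : V m → V m → Prop
  | .inl x, .inl y => y = x + 1 ∨ x = y + 1
  | .inl x, .inr (.inl i) => rr m x = i ∨ rr m x = i + 1
  | .inr (.inl i), .inl x => rr m x = i ∨ rr m x = i + 1
  | .inl x, .inr (.inr j) => pr m x = j
  | .inr (.inr j), .inl x => pr m x = j
  | .inr (.inl i), .inr (.inr j) => c42 i = j
  | .inr (.inr j), .inr (.inl i) => c42 i = j
  | .inr (.inl _), .inr (.inl _) => False
  | .inr (.inr _), .inr (.inr _) => False

instance adj0.dec (m : ℕ) : ∀ u v : V m, Decidable (adj0 m u v)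
  | .inl _, .inl _ => inferInstanceAs (Decidable (_ ∨ _))
  | .inl _, .inr (.inl _) => inferInstanceAs (Decidable (_ ∨ _))
  | .inr (.inl _), .inl _ => inferInstanceAs (Decidable (_ ∨ _))
  | .inl _, .inr (.inr _) => inferInstanceAs (Decidable (_ = _))
  | .inr (.inr _), .inl _ => inferInstanceAs (Decidable (_ = _))
  | .inr (.inl _), .inr (.inr _) => inferInstanceAs (Decidable (_ = _))
  | .inr (.inr _), .inr (.inl _) => inferInstanceAs (Decidable (_ = _))
  | .inr (.inl _), .inr (.inl _) => inferInstanceAs (Decidable False)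
  | .inr (.inr _), .inr (.inr _) => inferInstanceAs (Decidable False)

def G (m : ℕ) : SimpleGraph (V m) where
  Adj u v := u ≠ v ∧ adj0 m u v
  symm := by
    refine ⟨?_⟩
    rintro (x|i|j) (y|i'|j') ⟨hne, h⟩ <;>
      exact ⟨Ne.symm hne, by unfold adj0 at h ⊢ <;> tauto⟩
  loopless := ⟨fun v h => h.1 rfl⟩

instance (m : ℕ) : DecidableRel (G m).Adj := fun u v =>
  inferInstanceAs (Decidable (u ≠ v ∧ adj0 m u v))

def deg (m : ℕ) [NeZero m] (v : V m) : ℕ :=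
  (Finset.univ.filter (fun u => (G m).Adj v u)).card

def tInv (m : ℕ) [NeZero m] (v : V m) : ℕ :=
  (Finset.univ.filter
    (fun p : V m × V m => (G m).Adj v p.1 ∧ (G m).Adj v p.2 ∧ (G m).Adj p.1 p.2)).card

section Arith

variable {m : ℕ}

lemma m_ne (hm : 4 ≤ m) : NeZero m := ⟨by omega⟩

lemma cast_natCast_mod {k l : ℕ} (h : k ∣ l) (a : ℕ) :
    ((a % l : ℕ) : ZMod k) = (a : ZMod k) := by
  conv_rhs => rw [← Nat.mod_add_div a l]
  push_cast
  rw [(ZMod.natCast_eq_zero_iff l k).2 h]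
  ring

lemma one_ne' (hm : 4 ≤ m) : (1 : ZMod m) ≠ 0 := by
  intro h
  have : ((1:ℕ) : ZMod m) = 0 := by exact_mod_cast h
  have := (ZMod.natCast_eq_zero_iff 1 m).1 this
  have := Nat.le_of_dvd one_pos this
  omega

lemma two_ne' (hm : 4 ≤ m) : (2 : ZMod m) ≠ 0 := by
  intro h
  have : ((2:ℕ) : ZMod m) = 0 := by exact_mod_cast h
  have := (ZMod.natCast_eq_zero_iff 2 m).1 this
  have := Nat.le_of_dvd two_pos this
  omega

variable [NeZero m]

lemma val_add_cast {k : ℕ} (h : k ∣ m) (x y : ZMod m) :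
    (((x+y).val : ℕ) : ZMod k) = ((x.val : ZMod k) + (y.val : ZMod k)) := by
  rw [ZMod.val_add, cast_natCast_mod h]
  push_cast
  ring

lemma rr_add (h4 : 4 ∣ m) (x y : ZMod m) : rr m (x + y) = rr m x + rr m y :=
  val_add_cast h4 x y

lemma pr_add (h4 : 4 ∣ m) (x y : ZMod m) : pr m (x + y) = pr m x + pr m y :=
  val_add_cast (dvd_trans ⟨2, rfl⟩ h4) x y

lemma rr_zero : rr m 0 = 0 := by simp [rr]

lemma pr_zero : pr m 0 = 0 := by simp [pr]

lemma rr_one (hm : 4 ≤ m) : rr m 1 = 1 := by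
  haveI : Fact (1 < m) := ⟨by omega⟩
  simp [rr, ZMod.val_one]

lemma pr_one (hm : 4 ≤ m) : pr m 1 = 1 := by
  haveI : Fact (1 < m) := ⟨by omega⟩
  simp [pr, ZMod.val_one]

lemma c42_rr (x : ZMod m) : c42 (rr m x) = pr m x := by
  unfold c42 rr pr
  rw [ZMod.val_natCast]
  exact cast_natCast_mod (by norm_num) x.val

lemma c42_add : ∀ i i' : ZMod 4, c42 (i + i') = c42 i + c42 i' := by decide

lemma rr_lift (hm : 4 ≤ m) (i : ZMod 4) : rr m ((i.val : ℕ) : ZMod m) = i := by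
  unfold rr
  rw [ZMod.val_cast_of_lt (by have := i.val_lt; omega)]
  exact ZMod.natCast_rightInverse i

lemma pr_lift (hm : 4 ≤ m) (j : ZMod 2) : pr m ((j.val : ℕ) : ZMod m) = j := by
  unfold pr
  rw [ZMod.val_cast_of_lt (by have := j.val_lt; omega)]
  exact ZMod.natCast_rightInverse j

end Arith

section AdjLemmas

variable {m : ℕ}

lemma adj_inl_inl (hm : 4 ≤ m) {x y : ZMod m} :
    (G m).Adj (.inl x) (.inl y) ↔ y = x + 1 ∨ x = y + 1 := by
  constructor
  · exact fun h => h.2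
  · rintro (rfl | rfl)
    · exact ⟨by simp [left_eq_add, one_ne' hm], Or.inl rfl⟩
    · exact ⟨by simp [add_eq_left, one_ne' hm]
              , Or.inr rfl⟩

lemma adj_inl_cl {x : ZMod m} {i : ZMod 4} :
    (G m).Adj (.inl x) (.inr (.inl i)) ↔ rr m x = i ∨ rr m x = i + 1 :=
  ⟨fun h => h.2, fun h => ⟨by simp, h⟩⟩

lemma adj_cl_inl {x : ZMod m} {i : ZMod 4} :
    (G m).Adj (.inr (.inl i)) (.inl x) ↔ rr m x = i ∨ rr m x = i + 1 :=
  ⟨fun h => h.2, fun h => ⟨by simp, h⟩⟩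

lemma adj_inl_pa {x : ZMod m} {j : ZMod 2} :
    (G m).Adj (.inl x) (.inr (.inr j)) ↔ pr m x = j :=
  ⟨fun h => h.2, fun h => ⟨by simp, h⟩⟩

lemma adj_pa_inl {x : ZMod m} {j : ZMod 2} :
    (G m).Adj (.inr (.inr j)) (.inl x) ↔ pr m x = j :=
  ⟨fun h => h.2, fun h => ⟨by simp, h⟩⟩

lemma adj_cl_pa {i : ZMod 4} {j : ZMod 2} :
    (G m).Adj (.inr (.inl i)) (.inr (.inr j)) ↔ c42 i = j :=
  ⟨fun h => h.2, fun h => ⟨by simp, h⟩⟩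

lemma adj_pa_cl {i : ZMod 4} {j : ZMod 2} :
    (G m).Adj (.inr (.inr j)) (.inr (.inl i)) ↔ c42 i = j :=
  ⟨fun h => h.2, fun h => ⟨by simp, h⟩⟩

lemma adj_cl_cl {i i' : ZMod 4} :
    ¬ (G m).Adj (.inr (.inl i)) (.inr (.inl i')) := fun h => h.2

lemma adj_pa_pa {j j' : ZMod 2} :
    ¬ (G m).Adj (.inr (.inr j)) (.inr (.inr j')) := fun h => h.2

end AdjLemmas


open Finset

section Counting

lemma filter_sum {α β : Type*} [Fintype α] [Fintype β] [DecidableEq α] [DecidableEq β]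
    (p : α ⊕ β → Prop) [DecidablePred p] :
    (univ.filter p) =
      (univ.filter (fun a => p (.inl a))).disjSum (univ.filter (fun b => p (.inr b))) := by
  ext (a|b) <;> simp

lemma card_filter_sum {α β : Type*} [Fintype α] [Fintype β] [DecidableEq α] [DecidableEq β]
    (p : α ⊕ β → Prop) [DecidablePred p] :
    (univ.filter p).card =
      (univ.filter (fun a => p (.inl a))).card + (univ.filter (fun b => p (.inr b))).card := by
  rw [filter_sum p, Finset.card_disjSum]

variable {m : ℕ} [NeZero m]

lemma card_res {k : ℕ} (hk : k ∣ m) (hk0 : 0 < k) (c : ZMod k) :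
    (univ.filter fun x : ZMod m => ((x.val : ℕ) : ZMod k) = c).card = m / k := by
  haveI : NeZero k := ⟨hk0.ne'⟩
  rw [← Finset.card_range (m / k)]
  apply Finset.card_bij' (i := fun x _ => x.val / k)
      (j := fun q _ => ((k * q + c.val : ℕ) : ZMod m))
  · intro x hx
    simp only [Finset.mem_filter, Finset.mem_univ, true_and] at hx
    simp only [Finset.mem_range]
    exact Nat.div_lt_div_of_lt_of_dvd hk x.val_lt
  · intro q hq
    simp only [Finset.mem_range] at hq
    simp only [Finset.mem_filter, Finset.mem_univ, true_and]
    have hcv : c.val < k := c.val_lt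
    have hlt : k * q + c.val < m := by
      have h2 : k * (q + 1) ≤ k * (m / k) := Nat.mul_le_mul_left k hq
      rw [Nat.mul_div_cancel' hk] at h2
      have h3 : k * (q + 1) = k * q + k := by ring
      omega
    rw [ZMod.val_cast_of_lt hlt, show k * q + c.val = c.val + q * k by ring]
    push_cast
    rw [ZMod.natCast_self]
    simpa using ZMod.natCast_rightInverse c
  · intro x hx
    simp only [Finset.mem_filter, Finset.mem_univ, true_and] at hx
    have hmod : x.val % k = c.val := by
      have := congrArg ZMod.val hx
      rwa [ZMod.val_natCast] at this
    have hh : k * (x.val / k) + c.val = x.val := by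
      have := Nat.div_add_mod x.val k
      omega
    rw [hh]
    exact ZMod.natCast_rightInverse x
  · intro q hq
    simp only [Finset.mem_range] at hq
    have hcv : c.val < k := c.val_lt
    have hlt : k * q + c.val < m := by
      have h2 : k * (q + 1) ≤ k * (m / k) := Nat.mul_le_mul_left k hq
      rw [Nat.mul_div_cancel' hk] at h2
      have h3 : k * (q + 1) = k * q + k := by ring
      omega
    rw [ZMod.val_cast_of_lt hlt]
    rw [Nat.mul_add_div hk0, Nat.div_eq_of_lt hcv]
    omega

lemma card_rr (h4 : 4 ∣ m) (i : ZMod 4) :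
    (univ.filter fun x : ZMod m => rr m x = i).card = m / 4 :=
  card_res h4 (by norm_num) i

lemma card_pr (h4 : 4 ∣ m) (j : ZMod 2) :
    (univ.filter fun x : ZMod m => pr m x = j).card = m / 2 :=
  card_res (dvd_trans (by norm_num) h4) (by norm_num) j

end Counting

section Degrees

variable {m : ℕ} [NeZero m]

lemma deg_inl (hm : 4 ≤ m) (x : ZMod m) : deg m (.inl x) = 5 := by
  have h2 : (2 : ZMod m) ≠ 0 := two_ne' hm
  have key : (univ.filter fun u => (G m).Adj (.inl x) u) =
      ({.inl (x+1), .inl (x-1), .inr (.inl (rr m x)), .inr (.inl (rr m x - 1)),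
        .inr (.inr (pr m x))} : Finset (V m)) := by
    ext (y|i|j)
    · simp only [Finset.mem_filter, Finset.mem_univ, true_and, adj_inl_inl hm,
        Finset.mem_insert, Finset.mem_singleton]
      constructor
      · rintro (rfl|rfl)
        · tauto
        · right; left
          simp only [Sum.inl.injEq]
          ring
      · rintro (h|h|h|h|h) <;> simp_all
    · simp only [Finset.mem_filter, Finset.mem_univ, true_and, adj_inl_cl,
        Finset.mem_insert, Finset.mem_singleton]
      constructor
      · rintro (rfl|h)
        · tauto
        · have hh : rr m x - 1 = i := by rw [h]; ring
          tauto
      · rintro (h|h|h|h|h) <;> simp_all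
    · simp only [Finset.mem_filter, Finset.mem_univ, true_and, adj_inl_pa,
        Finset.mem_insert, Finset.mem_singleton]
      constructor
      · rintro rfl; tauto
      · rintro (h|h|h|h|h) <;> simp_all
  rw [deg, key]
  have d1 : x + 1 ≠ x - 1 := by
    intro h
    apply h2
    have h5 : (x + 1) - (x - 1) = 2 := by ring
    rw [h] at h5
    simpa using h5.symm
  have d2 : ∀ a : ZMod 4, ¬ a = a - 1 := by decide
  rw [Finset.card_insert_of_notMem (by simp [d1]),
      Finset.card_insert_of_notMem (by simp),
      Finset.card_insert_of_notMem (by simp [d2]),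
      Finset.card_insert_of_notMem (by simp),
      Finset.card_singleton]

lemma ne_add_one : ∀ a : ZMod 4, a ≠ a + 1 := by decide

lemma deg_cl (h4 : 4 ∣ m) (i : ZMod 4) : deg m (.inr (.inl i)) = m / 2 + 1 := by
  unfold deg
  rw [card_filter_sum, card_filter_sum]
  have hA : (univ.filter fun x : ZMod m => (G m).Adj (.inr (.inl i)) (.inl x)).card = m / 2 := by
    have hsplit : (univ.filter fun x : ZMod m => (G m).Adj (.inr (.inl i)) (.inl x)) =
        (univ.filter fun x : ZMod m => rr m x = i) ∪
          (univ.filter fun x : ZMod m => rr m x = i + 1) := by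
      ext x
      simp [adj_cl_inl, Finset.mem_union]
    have hdisj : Disjoint (univ.filter fun x : ZMod m => rr m x = i)
        (univ.filter fun x : ZMod m => rr m x = i + 1) := by
      rw [Finset.disjoint_left]
      intro x hx hx'
      simp only [Finset.mem_filter, Finset.mem_univ, true_and] at hx hx'
      exact ne_add_one i (hx.symm.trans hx')
    rw [hsplit, Finset.card_union_of_disjoint hdisj, card_rr h4, card_rr h4]
    obtain ⟨t, rfl⟩ := h4
    omega
  have hB : (univ.filter fun i' : ZMod 4 =>
      (G m).Adj (.inr (.inl i)) (.inr (.inl i'))).card = 0 := by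
    simp [adj_cl_cl]
  have hC : (univ.filter fun j : ZMod 2 =>
      (G m).Adj (.inr (.inl i)) (.inr (.inr j))).card = 1 := by
    have : (univ.filter fun j : ZMod 2 =>
        (G m).Adj (.inr (.inl i)) (.inr (.inr j))) =
        (univ.filter fun j : ZMod 2 => c42 i = j) := by
      ext j; simp [adj_cl_pa]
    rw [this]
    have hone : ∀ i : ZMod 4, (univ.filter fun j : ZMod 2 => c42 i = j).card = 1 := by decide
    exact hone i
  rw [hA, hB, hC]

lemma deg_pa (h4 : 4 ∣ m) (j : ZMod 2) : deg m (.inr (.inr j)) = m / 2 + 2 := by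
  unfold deg
  rw [card_filter_sum, card_filter_sum]
  have hA : (univ.filter fun x : ZMod m => (G m).Adj (.inr (.inr j)) (.inl x)).card = m / 2 := by
    have hsplit : (univ.filter fun x : ZMod m => (G m).Adj (.inr (.inr j)) (.inl x)) =
        (univ.filter fun x : ZMod m => pr m x = j) := by
      ext x; simp [adj_pa_inl]
    rw [hsplit, card_pr h4]
  have hB : (univ.filter fun i : ZMod 4 =>
      (G m).Adj (.inr (.inr j)) (.inr (.inl i))).card = 2 := by
    have : (univ.filter fun i : ZMod 4 =>
        (G m).Adj (.inr (.inr j)) (.inr (.inl i))) =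
        (univ.filter fun i : ZMod 4 => c42 i = j) := by
      ext i; simp [adj_pa_cl]
    rw [this]
    have htwo : ∀ j : ZMod 2, (univ.filter fun i : ZMod 4 => c42 i = j).card = 2 := by decide
    exact htwo j
  have hC : (univ.filter fun j' : ZMod 2 =>
      (G m).Adj (.inr (.inr j)) (.inr (.inr j'))).card = 0 := by
    simp [adj_pa_pa]
  rw [hA, hB, hC]


end Degrees

section Invariance

variable {m : ℕ} [NeZero m]

lemma deg_map (φ : G m ≃g G m) (v : V m) : deg m (φ v) = deg m v := by
  unfold deg
  apply Finset.card_bij' (i := fun u _ => φ.symm u) (j := fun u _ => φ u)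
  · intro u hu
    simp only [Finset.mem_filter, Finset.mem_univ, true_and] at hu ⊢
    rw [← φ.map_adj_iff]
    simpa using hu
  · intro u hu
    simp only [Finset.mem_filter, Finset.mem_univ, true_and] at hu ⊢
    exact φ.map_adj_iff.2 hu
  · intro u _; simp
  · intro u _; simp

lemma tInv_map (φ : G m ≃g G m) (v : V m) : tInv m (φ v) = tInv m v := by
  unfold tInv
  apply Finset.card_bij' (i := fun p _ => (φ.symm p.1, φ.symm p.2))
      (j := fun p _ => (φ p.1, φ p.2))
  · rintro ⟨u, w⟩ hu
    simp only [Finset.mem_filter, Finset.mem_univ, true_and] at hu ⊢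
    refine ⟨?_, ?_, ?_⟩
    · rw [← φ.map_adj_iff]; simpa using hu.1
    · rw [← φ.map_adj_iff]; simpa using hu.2.1
    · rw [← φ.map_adj_iff]; simpa using hu.2.2
  · rintro ⟨u, w⟩ hu
    simp only [Finset.mem_filter, Finset.mem_univ, true_and] at hu ⊢
    exact ⟨φ.map_adj_iff.2 hu.1, φ.map_adj_iff.2 hu.2.1, φ.map_adj_iff.2 hu.2.2⟩
  · rintro ⟨u, w⟩ _; simp
  · rintro ⟨u, w⟩ _; simp

end Invariance

section Eight

lemma tInv8_inl : ∀ x : ZMod 8, tInv 8 (.inl x) = 6 := by decide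
lemma tInv8_cl : ∀ i : ZMod 4, tInv 8 (.inr (.inl i)) = 8 := by decide

end Eight

section TypePreserved

variable {m : ℕ} [NeZero m]

lemma image_inl (h4 : 4 ∣ m) (hm : 4 ≤ m) (φ : G m ≃g G m) (x : ZMod m) :
    ∃ y, φ (.inl x) = .inl y := by
  rcases h : φ (.inl x) with y | i | j
  · exact ⟨y, rfl⟩
  · exfalso
    have hd := deg_map φ (.inl x)
    rw [h, deg_inl hm, deg_cl h4] at hd
    have hm8 : m = 8 := by omega
    subst hm8
    have ht := tInv_map φ (.inl x)
    rw [h, tInv8_cl i, tInv8_inl x] at ht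
    exact absurd ht (by norm_num)
  · exfalso
    have hd := deg_map φ (.inl x)
    rw [h, deg_inl hm, deg_pa h4] at hd
    omega

lemma image_special (h4 : 4 ∣ m) (hm : 4 ≤ m) (φ : G m ≃g G m) (w : ZMod 4 ⊕ ZMod 2) :
    ∃ w', φ (.inr w) = .inr w' := by
  rcases h : φ (.inr w) with y | i | j
  · exfalso
    obtain ⟨z, hz⟩ := image_inl h4 hm φ.symm y
    have h' : φ.symm (.inl y) = .inr w := by rw [← h]; simp
    rw [hz] at h'
    exact absurd h' (by simp)
  · exact ⟨.inl i, rfl⟩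
  · exact ⟨.inr j, rfl⟩

lemma image_cl (h4 : 4 ∣ m) (hm : 4 ≤ m) (φ : G m ≃g G m) (i : ZMod 4) :
    ∃ i', φ (.inr (.inl i)) = .inr (.inl i') := by
  obtain ⟨w', hw'⟩ := image_special h4 hm φ (.inl i)
  rcases w' with i' | j
  · exact ⟨i', hw'⟩
  · exfalso
    have hdec : ∀ j : ZMod 2, c42 ((j.val : ZMod 4)) = j ∧ c42 ((j.val : ZMod 4) + 2) = j ∧
        (j.val : ZMod 4) ≠ (j.val : ZMod 4) + 2 := by decide
    obtain ⟨hc1, hc2, hne⟩ := hdec j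
    set a : ZMod 4 := ((j.val : ℕ) : ZMod 4) with ha
    have hadj1 : (G m).Adj (.inr (.inr j)) (.inr (.inl a)) := adj_pa_cl.2 hc1
    have hadj2 : (G m).Adj (.inr (.inr j)) (.inr (.inl (a+2))) := adj_pa_cl.2 hc2
    have hsymm : φ.symm (.inr (.inr j)) = .inr (.inl i) := by rw [← hw']; simp
    have key : ∀ b : ZMod 4, (G m).Adj (.inr (.inr j)) (.inr (.inl b)) →
        φ.symm (.inr (.inl b)) = .inr (.inr (c42 i)) := by
      intro b hb
      have hb2 : (G m).Adj (φ.symm (.inr (.inr j))) (φ.symm (.inr (.inl b))) := by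
        rw [← φ.symm.map_adj_iff] at hb
        exact hb
      rw [hsymm] at hb2
      obtain ⟨w'', hw''⟩ := image_special h4 hm φ.symm (.inl b)
      rcases w'' with b' | c
      · rw [hw''] at hb2
        exact absurd hb2 adj_cl_cl
      · rw [hw''] at hb2
        rw [adj_cl_pa] at hb2
        rw [hw'', hb2]
    have e1 := key a hadj1
    have e2 := key (a+2) hadj2
    have e3 : φ.symm (.inr (.inl a)) = φ.symm (.inr (.inl (a+2))) := by rw [e1, e2]
    have e4 := φ.symm.injective e3
    simp only [Sum.inr.injEq, Sum.inl.injEq] at e4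
    exact hne e4

lemma image_pa (h4 : 4 ∣ m) (hm : 4 ≤ m) (φ : G m ≃g G m) (j : ZMod 2) :
    ∃ j', φ (.inr (.inr j)) = .inr (.inr j') := by
  obtain ⟨w', hw'⟩ := image_special h4 hm φ (.inr j)
  rcases w' with i' | j'
  · exfalso
    obtain ⟨i'', hi''⟩ := image_cl h4 hm φ.symm i'
    have h' : φ.symm (.inr (.inl i')) = .inr (.inr j) := by rw [← hw']; simp
    rw [hi''] at h'
    exact absurd h' (by simp)
  · exact ⟨j', hw'⟩

end TypePreserved


section GIso

variable {m : ℕ} [NeZero m]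

def gEquiv (m : ℕ) (c : ZMod m) : V m ≃ V m :=
  Equiv.sumCongr (Equiv.addRight c)
    (Equiv.sumCongr (Equiv.addRight (rr m c)) (Equiv.addRight (pr m c)))

def gIso (h4 : 4 ∣ m) (hm : 4 ≤ m) (c : ZMod m) : G m ≃g G m where
  toEquiv := gEquiv m c
  map_rel_iff' := by
    rintro (x|i|j) (y|i'|j') <;>
      simp only [gEquiv, Equiv.sumCongr_apply, Sum.map_inl, Sum.map_inr,
        Equiv.coe_addRight]
    · rw [adj_inl_inl hm, adj_inl_inl hm]
      constructor <;> rintro (h|h)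
      · left; linear_combination h
      · right; linear_combination h
      · left; linear_combination h
      · right; linear_combination h
    · rw [adj_inl_cl, adj_inl_cl, rr_add h4]
      constructor <;> rintro (h|h)
      · left; linear_combination h
      · right; linear_combination h
      · left; linear_combination h
      · right; linear_combination h
    · rw [adj_inl_pa, adj_inl_pa, pr_add h4]
      exact add_left_inj _
    · rw [adj_cl_inl, adj_cl_inl, rr_add h4]
      constructor <;> rintro (h|h)
      · left; linear_combination h
      · right; linear_combination h
      · left; linear_combination h
      · right; linear_combination h
    · exact iff_of_false adj_cl_cl adj_cl_cl
    · rw [adj_cl_pa, adj_cl_pa, c42_add, c42_rr]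
      exact add_left_inj _
    · rw [adj_pa_inl, adj_pa_inl, pr_add h4]
      exact add_left_inj _
    · rw [adj_pa_cl, adj_pa_cl, c42_add, c42_rr]
      exact add_left_inj _
    · exact iff_of_false adj_pa_pa adj_pa_pa

variable (h4 : 4 ∣ m) (hm : 4 ≤ m)

@[simp] lemma gIso_inl (c x : ZMod m) : gIso h4 hm c (.inl x) = .inl (x + c) := rfl
@[simp] lemma gIso_cl (c : ZMod m) (i : ZMod 4) :
    gIso h4 hm c (.inr (.inl i)) = .inr (.inl (i + rr m c)) := rfl
@[simp] lemma gIso_pa (c : ZMod m) (j : ZMod 2) :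
    gIso h4 hm c (.inr (.inr j)) = .inr (.inr (j + pr m c)) := rfl

end GIso

section Rigidity

variable {m : ℕ} [NeZero m]

lemma f_lin (hm : 4 ≤ m) (f : ZMod m → ZMod m) (hinj : Function.Injective f)
    (hstep : ∀ x, f (x + 1) = f x + 1 ∨ f (x + 1) = f x - 1)
    (hs01 : f 1 - f 0 = 1 ∨ f 1 - f 0 = -1) :
    ∀ x : ZMod m, f x = f 0 + (f 1 - f 0) * x := by
  have h2 : (2 : ZMod m) ≠ 0 := two_ne' hm
  set s := f 1 - f 0 with hs
  have main : ∀ k : ℕ, f (k : ZMod m) = f 0 + s * k ∧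
      f ((k : ZMod m) + 1) = f 0 + s * (k + 1) := by
    intro k
    induction k with
    | zero =>
      refine ⟨by simp, ?_⟩
      have h0 : ((0:ℕ) : ZMod m) = 0 := by norm_num
      rw [h0, zero_add, hs]
      ring
    | succ k ih =>
      have e1 : ((k + 1 : ℕ) : ZMod m) = (k : ZMod m) + 1 := by push_cast; ring
      refine ⟨by rw [e1]; simpa using ih.2, ?_⟩
      rw [e1]
      rcases hstep ((k : ZMod m) + 1) with h | h <;> rcases hs01 with h1 | h1
      · rw [h, ih.2, h1]; push_cast; ring
      · exfalso
        have hk : f ((k : ZMod m) + 1 + 1) = f (k : ZMod m) := by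
          rw [h, ih.2, ih.1, h1]; ring
        have := hinj hk
        apply h2
        linear_combination this
      · exfalso
        have hk : f ((k : ZMod m) + 1 + 1) = f (k : ZMod m) := by
          rw [h, ih.2, ih.1, h1]; ring
        have := hinj hk
        apply h2
        linear_combination this
      · rw [h, ih.2, h1]; push_cast; ring
  intro x
  have := (main x.val).1
  rwa [ZMod.natCast_rightInverse x] at this

lemma aut_surj (h4 : 4 ∣ m) (hm : 4 ≤ m) (φ : G m ≃g G m) :
    ∃ c : ZMod m, gIso h4 hm c = φ := by
  choose f hf using fun x => image_inl h4 hm φ x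
  have hinj : Function.Injective f := by
    intro a b hab
    have h1 : φ (.inl a) = φ (.inl b) := by rw [hf a, hf b, hab]
    have := φ.injective h1
    simpa using this
  have hstep : ∀ x, f (x + 1) = f x + 1 ∨ f (x + 1) = f x - 1 := by
    intro x
    have hadj : (G m).Adj (.inl x) (.inl (x + 1)) := (adj_inl_inl hm).2 (Or.inl rfl)
    have := φ.map_adj_iff.mpr hadj
    rw [hf x, hf (x + 1), adj_inl_inl hm] at this
    rcases this with h | h
    · exact Or.inl h
    · right; linear_combination -h
  have hs01 : f 1 - f 0 = 1 ∨ f 1 - f 0 = -1 := by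
    have := hstep 0
    rw [zero_add] at this
    rcases this with h | h
    · left; rw [h]; ring
    · right; rw [h]; ring
  have hall := f_lin hm f hinj hstep hs01
  set s := f 1 - f 0 with hs
  set c := f 0 with hc
  rcases hs01 with h1 | h1
  · refine ⟨c, RelIso.ext ?_⟩
    rintro (x | i | j)
    · rw [gIso_inl, hf x, hall x, h1]
      congr 1
      ring
    · obtain ⟨a, ha⟩ := image_cl h4 hm φ i
      rw [gIso_cl, ha]
      have hx0 : rr m ((i.val : ℕ) : ZMod m) = i := rr_lift hm i
      set x₀ : ZMod m := ((i.val : ℕ) : ZMod m) with hx₀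
      have hadj1 : (G m).Adj (.inr (.inl i)) (.inl x₀) := adj_cl_inl.2 (Or.inl hx0)
      have hadj2 : (G m).Adj (.inr (.inl i)) (.inl (x₀ + 1)) := by
        apply adj_cl_inl.2
        right
        rw [rr_add h4, rr_one hm, hx0]
      have t1 := φ.map_adj_iff.mpr hadj1
      have t2 := φ.map_adj_iff.mpr hadj2
      rw [ha, hf, adj_cl_inl] at t1 t2
      rw [hall x₀, h1, one_mul] at t1
      rw [hall (x₀ + 1), h1, one_mul] at t2
      rw [rr_add h4, hx0] at t1
      rw [rr_add h4, rr_add h4, rr_one hm, hx0] at t2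
      have hdec : ∀ t a : ZMod 4, (t = a ∨ t = a + 1) → (t + 1 = a ∨ t + 1 = a + 1) →
          a = t := by decide
      have haa : a = rr m c + i := by
        apply hdec _ _ ?_ ?_
        · rcases t1 with h | h
          · left; linear_combination h
          · right; linear_combination h
        · rcases t2 with h | h
          · left; linear_combination h
          · right; linear_combination h
      rw [haa, add_comm]
    · obtain ⟨b, hb⟩ := image_pa h4 hm φ j
      rw [gIso_pa, hb]
      have hx0 : pr m ((j.val : ℕ) : ZMod m) = j := pr_lift hm j
      set x₀ : ZMod m := ((j.val : ℕ) : ZMod m) with hx₀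
      have hadj1 : (G m).Adj (.inr (.inr j)) (.inl x₀) := adj_pa_inl.2 hx0
      have t1 := φ.map_adj_iff.mpr hadj1
      rw [hb, hf, adj_pa_inl] at t1
      rw [hall x₀, h1, one_mul, pr_add h4, hx0] at t1
      rw [← t1, add_comm]
  · exfalso
    obtain ⟨a, ha⟩ := image_cl h4 hm φ 0
    obtain ⟨b, hb⟩ := image_pa h4 hm φ 0
    have hadj1 : (G m).Adj (.inr (.inl 0)) (.inl 0) := adj_cl_inl.2 (Or.inl rr_zero)
    have hadj2 : (G m).Adj (.inr (.inl 0)) (.inl 1) := by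
      apply adj_cl_inl.2
      right
      rw [rr_one hm, zero_add]
    have hadj3 : (G m).Adj (.inr (.inr 0)) (.inl 0) := adj_pa_inl.2 pr_zero
    have hadj4 : (G m).Adj (.inr (.inl 0)) (.inr (.inr 0)) := adj_cl_pa.2 (by decide)
    have t1 := φ.map_adj_iff.mpr hadj1
    have t2 := φ.map_adj_iff.mpr hadj2
    have t3 := φ.map_adj_iff.mpr hadj3
    have t4 := φ.map_adj_iff.mpr hadj4
    rw [ha, hf, adj_cl_inl] at t1 t2
    rw [hb, hf, adj_pa_inl] at t3
    rw [ha, hb, adj_cl_pa] at t4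
    rw [hall 0, h1] at t1 t3
    rw [hall 1, h1] at t2
    simp only [mul_zero, add_zero, mul_one] at t1 t2 t3
    have hr1 : rr m (c + -1) = rr m c - 1 := by
      have h5 := rr_add h4 (c + -1) 1
      rw [show c + -1 + 1 = c by ring, rr_one hm] at h5
      linear_combination -h5
    rw [hr1] at t2
    have hc42 : c42 (rr m c) = pr m c := c42_rr _
    have hdec : ∀ t a₀ : ZMod 4, ∀ p : ZMod 2,
        (t = a₀ ∨ t = a₀ + 1) → (t - 1 = a₀ ∨ t - 1 = a₀ + 1) →
        c42 a₀ = p → c42 t = p → False := by decide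
    apply hdec (rr m c) a (pr m c) t1 ?_ ?_ hc42
    · rcases t2 with h | h
      · left; linear_combination h
      · right; linear_combination h
    · rw [← t3] at t4
      exact t4

end Rigidity

section Assemble

variable {m : ℕ} [NeZero m]

lemma aut_mul_apply {α : Type*} {Γ : SimpleGraph α} (a b : Γ ≃g Γ) (v : α) :
    (a * b) v = a (b v) := rfl

lemma aut_one_apply {α : Type*} {Γ : SimpleGraph α} (v : α) : (1 : Γ ≃g Γ) v = v := rfl

def Phi (h4 : 4 ∣ m) (hm : 4 ≤ m) : Multiplicative (ZMod m) →* (G m ≃g G m) where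
  toFun c := gIso h4 hm c.toAdd
  map_one' := by
    apply RelIso.ext
    rintro (x | i | j) <;>
      rw [aut_one_apply] <;>
      simp [toAdd_one, rr_zero, pr_zero]
  map_mul' c c' := by
    apply RelIso.ext
    rintro (x | i | j) <;>
      rw [aut_mul_apply] <;>
      simp only [toAdd_mul, gIso_inl, gIso_cl, gIso_pa, rr_add h4, pr_add h4] <;>
      congr 1 <;> ring

lemma Phi_injective (h4 : 4 ∣ m) (hm : 4 ≤ m) : Function.Injective (Phi h4 hm) := by
  intro c c' h
  have := congrArg (fun ψ : G m ≃g G m => ψ (Sum.inl 0)) h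
  simp only [Phi, MonoidHom.coe_mk, OneHom.coe_mk, gIso_inl, Sum.inl.injEq, zero_add] at this
  exact Multiplicative.toAdd.injective this

lemma Phi_surjective (h4 : 4 ∣ m) (hm : 4 ≤ m) : Function.Surjective (Phi h4 hm) := by
  intro φ
  obtain ⟨c, hc⟩ := aut_surj h4 hm φ
  exact ⟨Multiplicative.ofAdd c, hc⟩

lemma aut_mulEquiv (h4 : 4 ∣ m) (hm : 4 ≤ m) :
    Nonempty ((G m ≃g G m) ≃* Multiplicative (ZMod m)) :=
  ⟨(MulEquiv.ofBijective (Phi h4 hm) ⟨Phi_injective h4 hm, Phi_surjective h4 hm⟩).symm⟩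

def autCongr {α β : Type*} {Γ₁ : SimpleGraph α} {Γ₂ : SimpleGraph β} (e : Γ₁ ≃g Γ₂) :
    (Γ₁ ≃g Γ₁) ≃* (Γ₂ ≃g Γ₂) where
  toFun φ := (e.symm.trans (φ.trans e))
  invFun ψ := (e.trans (ψ.trans e.symm))
  left_inv φ := RelIso.ext (fun v => by simp)
  right_inv ψ := RelIso.ext (fun v => by simp)
  map_mul' φ ψ := RelIso.ext (fun v => by
    rw [aut_mul_apply]
    simp)

end Assemble

lemma exists_graph (n : ℕ) (hn : 2 ≤ n) :
    ∃ Γ' : SimpleGraph (Fin (2 ^ n + 6)),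
      Nonempty ((Γ' ≃g Γ') ≃* Multiplicative (ZMod (2 ^ n))) := by
  have h4 : (4 : ℕ) ∣ 2 ^ n := by
    have h := pow_dvd_pow 2 hn
    norm_num at h
    exact h
  have hm : 4 ≤ 2 ^ n := by
    calc (4 : ℕ) = 2 ^ 2 := by norm_num
    _ ≤ 2 ^ n := Nat.pow_le_pow_right (by norm_num) hn
  haveI : NeZero (2 ^ n) := ⟨by positivity⟩
  have ecard : Fintype.card (Fin (2 ^ n + 6)) = Fintype.card (V (2 ^ n)) := by
    simp [ZMod.card]
  let e : Fin (2 ^ n + 6) ≃ V (2 ^ n) := Fintype.equivOfCardEq ecard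
  refine ⟨SimpleGraph.comap (⇑e.toEmbedding) (G (2 ^ n)), ?_⟩
  obtain ⟨E⟩ := aut_mulEquiv h4 hm
  exact ⟨(autCongr (SimpleGraph.Iso.comap e (G (2 ^ n)))).trans E⟩


end S19

/-- `μ(ℤ/2^n ℤ) ≤ 2^n + 6` for `n ≥ 2`, and this bound is less
    than `2·|G| = 2^{n+1}` for `n ≥ 3`. -/
theorem stmt19 (n : ℕ) (hn : 2 ≤ n) :
    sInf {N | HasAutCyclic2 n N} ≤ 2 ^ n + 6 ∧
    (3 ≤ n → 2 ^ n + 6 < 2 * 2 ^ n) := by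
  constructor
  · apply Nat.sInf_le
    exact S19.exists_graph n hn
  · intro h3
    have h8 : 8 ≤ 2 ^ n := by
      calc (8 : ℕ) = 2 ^ 3 := by norm_num
      _ ≤ 2 ^ n := Nat.pow_le_pow_right (by norm_num) h3
    omega
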